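/- With the notation of the context, if β < α ≤ ((λ₁+λ₂)/(1+λ₁λ₂))·β < 0, then Φ(1) ∈ (−2π, −π]. (This is case '−1' of Lemma 2.8: for lifts A, B of τ_{∞,0}(λ₁), τ_{α,β}(λ₂) to the m-fold covering group of PSL(2,ℝ), lev_m(A·B) − lev_m(A) − lev_m(B) = −1.) -/

import Mathlib

/-- `λ(t) = 1 + t(λ−1)`, deforming the shift parameter from `1` to `λ`. -/
noncomputable def lamt (l t : ℝ) : ℝ := 1 + t * (l - 1)

/-- The hyperbolic element `τ_{∞,0}(λ₁(t))` of `SL(2,ℝ)` as a matrix. -/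
noncomputable def matA (l1 t : ℝ) : Matrix (Fin 2) (Fin 2) ℝ :=
  !![Real.sqrt (lamt l1 t), 0; 0, (Real.sqrt (lamt l1 t))⁻¹]

/-- The hyperbolic element `τ_{α,β}(λ₂(t))` of `SL(2,ℝ)` with fixed points `α`, `β`. -/
noncomputable def matB (l2 α β t : ℝ) : Matrix (Fin 2) (Fin 2) ℝ :=
  ((α - β) * Real.sqrt (lamt l2 t))⁻¹ •
    !![lamt l2 t * α - β, -((lamt l2 t - 1) * α * β);
       lamt l2 t - 1, α - lamt l2 t * β]

/-- The product path `M(t) = A(t)·B(t)`. -/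
noncomputable def matM (l1 l2 α β t : ℝ) : Matrix (Fin 2) (Fin 2) ℝ :=
  matA l1 t * matB l2 α β t

/-- `w(t) = (a(t)+d(t)) + i(b(t)−c(t))`. -/
noncomputable def wfun (l1 l2 α β t : ℝ) : ℂ :=
  ((matM l1 l2 α β t 0 0 + matM l1 l2 α β t 1 1 : ℝ) : ℂ) +
    Complex.I * ((matM l1 l2 α β t 0 1 - matM l1 l2 α β t 1 0 : ℝ) : ℂ)

/-- Real part numerator of `w(t)` (up to the positive factor). -/
noncomputable def Pf (l1 l2 α β t : ℝ) : ℝ :=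
  lamt l1 t * (lamt l2 t * α - β) + (α - lamt l2 t * β)

/-- Imaginary part numerator of `w(t)` (up to the positive factor). -/
noncomputable def Qf (l1 l2 α β t : ℝ) : ℝ :=
  -((lamt l2 t - 1) * (lamt l1 t * α * β + 1))

lemma wfun_eq (l1 l2 α β t : ℝ) (h1 : 0 < lamt l1 t) (h2 : 0 < lamt l2 t)
    (hab : α ≠ β) :
    wfun l1 l2 α β t =
      ((((α - β) * Real.sqrt (lamt l1 t) * Real.sqrt (lamt l2 t))⁻¹ : ℝ) : ℂ) *
        ((Pf l1 l2 α β t : ℂ) + (Qf l1 l2 α β t : ℂ) * Complex.I) := by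
  have hs1 : 0 < Real.sqrt (lamt l1 t) := Real.sqrt_pos.mpr h1
  have hs2 : 0 < Real.sqrt (lamt l2 t) := Real.sqrt_pos.mpr h2
  set s1 := Real.sqrt (lamt l1 t) with hs1d
  set s2 := Real.sqrt (lamt l2 t) with hs2d
  have hs1sq : s1 * s1 = lamt l1 t := Real.mul_self_sqrt h1.le
  have hd : α - β ≠ 0 := sub_ne_zero.mpr hab
  have e00 : matM l1 l2 α β t 0 0 = s1 * (((α - β) * s2)⁻¹ * (lamt l2 t * α - β)) := by
    simp [matM, matA, matB, Matrix.mul_apply, Fin.sum_univ_two]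
    rfl
  have e01 : matM l1 l2 α β t 0 1 = s1 * (((α - β) * s2)⁻¹ * -((lamt l2 t - 1) * α * β)) := by
    simp [matM, matA, matB, Matrix.mul_apply, Fin.sum_univ_two]
    rfl
  have e10 : matM l1 l2 α β t 1 0 = s1⁻¹ * (((α - β) * s2)⁻¹ * (lamt l2 t - 1)) := by
    simp [matM, matA, matB, Matrix.mul_apply, Fin.sum_univ_two]
    rfl
  have e11 : matM l1 l2 α β t 1 1 = s1⁻¹ * (((α - β) * s2)⁻¹ * (α - lamt l2 t * β)) := by
    simp [matM, matA, matB, Matrix.mul_apply, Fin.sum_univ_two]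
    rfl
  have hre : matM l1 l2 α β t 0 0 + matM l1 l2 α β t 1 1
      = ((α - β) * s1 * s2)⁻¹ * Pf l1 l2 α β t := by
    rw [e00, e11, Pf, ← hs1sq]
    field_simp
  have him : matM l1 l2 α β t 0 1 - matM l1 l2 α β t 1 0
      = ((α - β) * s1 * s2)⁻¹ * Qf l1 l2 α β t := by
    rw [e01, e10, Qf, ← hs1sq]
    field_simp
    ring
  rw [wfun, hre, him]
  push_cast
  ring

open Complex in
lemma exp_eq_aux (φ k P Q : ℝ) (hk : 0 < k) (hPQ : 0 < P ^ 2 + Q ^ 2)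
    (h : Complex.exp (Complex.I * (φ : ℂ))
      = (((k : ℝ) : ℂ) * ((P : ℂ) + (Q : ℂ) * Complex.I) /
          (‖((k : ℝ) : ℂ) * ((P : ℂ) + (Q : ℂ) * Complex.I)‖ : ℂ)) ^ 2) :
    Real.sin φ = 2 * P * Q / (P ^ 2 + Q ^ 2) ∧
      Real.cos φ = (P ^ 2 - Q ^ 2) / (P ^ 2 + Q ^ 2) := by
  set z : ℂ := (P : ℂ) + (Q : ℂ) * Complex.I with hz
  have hnz : ‖z‖ ^ 2 = P ^ 2 + Q ^ 2 := by
    rw [Complex.sq_norm]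
    simp [hz, Complex.normSq_add_mul_I]
  have hzne : z ≠ 0 := by
    intro h0
    rw [h0] at hnz
    simp at hnz
    nlinarith
  have hnorm : (‖((k : ℝ) : ℂ) * z‖ : ℂ) = (k : ℂ) * (‖z‖ : ℂ) := by
    rw [norm_mul]
    push_cast
    simp [abs_of_pos hk]
  have hrhs : (((k : ℝ) : ℂ) * z / (‖((k : ℝ) : ℂ) * z‖ : ℂ)) ^ 2
      = z ^ 2 / ((P ^ 2 + Q ^ 2 : ℝ) : ℂ) := by
    rw [hnorm]
    have hk0 : (k : ℂ) ≠ 0 := by exact_mod_cast hk.ne'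
    rw [mul_div_mul_left _ _ hk0]
    rw [div_pow, ← Complex.ofReal_pow, hnz]
  rw [hrhs] at h
  have hzsq : z ^ 2 = ((P ^ 2 - Q ^ 2 : ℝ) : ℂ) + ((2 * P * Q : ℝ) : ℂ) * Complex.I := by
    rw [hz]
    push_cast
    ring_nf
    rw [Complex.I_sq]
    ring
  rw [hzsq, mul_comm] at h
  constructor
  · have h2 := congrArg Complex.im h
    rw [Complex.exp_ofReal_mul_I_im, Complex.div_ofReal_im] at h2
    simpa [← Complex.ofReal_pow] using h2
  · have h2 := congrArg Complex.re h
    rw [Complex.exp_ofReal_mul_I_re, Complex.div_ofReal_re] at h2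
    simpa [← Complex.ofReal_pow] using h2

set_option maxHeartbeats 1000000 in
/-- Case `−1` of Lemma 2.8: if `β < α ≤ ((λ₁+λ₂)/(1+λ₁λ₂))·β < 0` then `Φ(1) ∈ (−2π, −π]`. -/
theorem lemma28_case_minus_one (l1 l2 α β : ℝ) (hl1 : 1 < l1) (hl2 : 1 < l2)
    (hα : α ≠ 0) (hβ : β ≠ 0) (hαβ : α ≠ β)
    (Φ : ℝ → ℝ) (hΦc : ContinuousOn Φ (Set.Icc 0 1)) (hΦ0 : Φ 0 = 0)
    (hΦ : ∀ t ∈ Set.Icc (0 : ℝ) 1,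
      Complex.exp (Complex.I * (Φ t : ℂ))
        = (wfun l1 l2 α β t / (‖wfun l1 l2 α β t‖ : ℂ)) ^ 2)
    (hcase : β < α ∧ α ≤ (l1 + l2) / (1 + l1 * l2) * β ∧
      (l1 + l2) / (1 + l1 * l2) * β < 0) :
    Φ 1 ∈ Set.Ioc (-(2 * Real.pi)) (-Real.pi) := by
  obtain ⟨hba, hle, hneg⟩ := hcase
  have hden : (0 : ℝ) < 1 + l1 * l2 := by nlinarith
  have hrp : (0 : ℝ) < (l1 + l2) / (1 + l1 * l2) := div_pos (by linarith) hden
  have hαneg : α < 0 := lt_of_le_of_lt hle hneg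
  have hβneg : β < 0 := by nlinarith
  have hαβpos : 0 < α * β := mul_pos_of_neg_of_neg hαneg hβneg
  have hba' : 0 < α - β := sub_pos.mpr hba
  -- key sign facts
  have hlam : ∀ l t : ℝ, 1 < l → 0 ≤ t → 0 < lamt l t := by
    intro l t h ht
    simp only [lamt]
    nlinarith
  have hQ : ∀ t : ℝ, 0 < t → Qf l1 l2 α β t < 0 := by
    intro t ht
    have h2 : 0 < lamt l2 t - 1 := by
      simp only [lamt]
      nlinarith
    have h1 : 0 < lamt l1 t * α * β + 1 := by
      simp only [lamt]
      nlinarith [mul_pos (mul_pos ht (sub_pos.mpr hl1)) hαβpos]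
    simp only [Qf]
    nlinarith [mul_pos h2 h1]
  have hP0 : 0 < Pf l1 l2 α β 0 := by
    simp only [Pf, lamt]
    nlinarith
  have hPQ : ∀ t ∈ Set.Icc (0 : ℝ) 1,
      0 < Pf l1 l2 α β t ^ 2 + Qf l1 l2 α β t ^ 2 := by
    intro t ht
    rcases eq_or_lt_of_le ht.1 with h | h
    · rw [← h]
      nlinarith [hP0]
    · nlinarith [hQ t h]
  have hP1 : Pf l1 l2 α β 1 ≤ 0 := by
    rw [div_mul_eq_mul_div, le_div_iff₀ hden] at hle
    simp only [Pf, lamt]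
    nlinarith
  -- sin and cos of Φ t
  have hsincos : ∀ t ∈ Set.Icc (0 : ℝ) 1,
      Real.sin (Φ t) = 2 * Pf l1 l2 α β t * Qf l1 l2 α β t /
          (Pf l1 l2 α β t ^ 2 + Qf l1 l2 α β t ^ 2) ∧
        Real.cos (Φ t) = (Pf l1 l2 α β t ^ 2 - Qf l1 l2 α β t ^ 2) /
          (Pf l1 l2 α β t ^ 2 + Qf l1 l2 α β t ^ 2) := by
    intro t ht
    have h1 := hlam l1 t hl1 ht.1
    have h2 := hlam l2 t hl2 ht.1
    have hw := wfun_eq l1 l2 α β t h1 h2 hαβ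
    have hk : 0 < ((α - β) * Real.sqrt (lamt l1 t) * Real.sqrt (lamt l2 t))⁻¹ :=
      inv_pos.mpr (mul_pos (mul_pos hba' (Real.sqrt_pos.mpr h1)) (Real.sqrt_pos.mpr h2))
    have heq := hΦ t ht
    rw [hw] at heq
    exact exp_eq_aux (Φ t) _ _ _ hk (hPQ t ht) heq
  -- Φ t avoids 0 and −2π for t ∈ (0,1]
  have hzero : ∀ t : ℝ, 0 < t → t ≤ 1 → Φ t ≠ 0 ∧ Φ t ≠ -(2 * Real.pi) := by
    intro t ht0 ht1
    obtain ⟨hsin, hcos⟩ := hsincos t ⟨ht0.le, ht1⟩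
    have hQt := hQ t ht0
    have hrt := hPQ t ⟨ht0.le, ht1⟩
    have key : Real.cos (Φ t) ≠ 1 := by
      intro h1
      rw [h1, eq_comm, div_eq_one_iff_eq hrt.ne'] at hcos
      nlinarith
    constructor
    · intro heq
      apply key
      rw [heq, Real.cos_zero]
    · intro heq
      apply key
      rw [heq, Real.cos_neg, Real.cos_two_pi]
  -- a small positive time with Φ ∈ (−π, 0)
  have hPcont : Continuous (fun t => Pf l1 l2 α β t) := by
    unfold Pf lamt
    fun_prop
  have hnebot : (nhdsWithin (0 : ℝ) (Set.Ioc 0 1)).NeBot := by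
    rw [nhdsWithin_Ioc_eq_nhdsGT (zero_lt_one)]
    infer_instance
  have hev1 : ∀ᶠ t in nhdsWithin (0 : ℝ) (Set.Ioc 0 1), 0 < Pf l1 l2 α β t :=
    (hPcont.continuousAt.eventually (eventually_gt_nhds hP0)).filter_mono nhdsWithin_le_nhds
  have hev2 : ∀ᶠ t in nhdsWithin (0 : ℝ) (Set.Ioc 0 1), |Φ t| < Real.pi := by
    have hcw : ContinuousWithinAt Φ (Set.Icc 0 1) 0 :=
      hΦc 0 ⟨le_refl 0, zero_le_one⟩
    have hcw' : Filter.Tendsto Φ (nhdsWithin (0 : ℝ) (Set.Ioc 0 1)) (nhds 0) := by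
      have h' : Filter.Tendsto Φ (nhdsWithin (0 : ℝ) (Set.Icc 0 1)) (nhds (Φ 0)) := hcw
      rw [hΦ0] at h'
      exact h'.mono_left (nhdsWithin_mono _ Set.Ioc_subset_Icc_self)
    have := hcw'.eventually (eventually_abs_sub_lt 0 Real.pi_pos)
    simpa using this
  have hev3 : ∀ᶠ t in nhdsWithin (0 : ℝ) (Set.Ioc 0 1), t ∈ Set.Ioc (0 : ℝ) 1 :=
    eventually_mem_nhdsWithin
  obtain ⟨t₀, hm, hp0, habs⟩ := (hev3.and (hev1.and hev2)).exists
  obtain ⟨hsin₀, -⟩ := hsincos t₀ ⟨hm.1.le, hm.2⟩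
  have hQ₀ := hQ t₀ hm.1
  have hsneg : Real.sin (Φ t₀) < 0 := by
    rw [hsin₀]
    apply div_neg_of_neg_of_pos
    · nlinarith
    · exact hPQ t₀ ⟨hm.1.le, hm.2⟩
  have hΦt₀neg : Φ t₀ < 0 := by
    by_contra hge
    push_neg at hge
    have := Real.sin_nonneg_of_nonneg_of_le_pi hge (le_of_lt (abs_lt.mp habs).2)
    linarith
  have hΦt₀gt : -Real.pi < Φ t₀ := (abs_lt.mp habs).1
  -- IVT: Φ 1 ∈ (−2π, 0)
  have hΦm : ContinuousOn Φ (Set.Icc t₀ 1) :=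
    hΦc.mono (Set.Icc_subset_Icc hm.1.le le_rfl)
  have h1ne := hzero 1 one_pos le_rfl
  have hΦ1lt : Φ 1 < 0 := by
    rcases lt_or_ge (Φ 1) 0 with h | h
    · exact h
    · have hpos : 0 < Φ 1 := lt_of_le_of_ne h (Ne.symm h1ne.1)
      have hmem : (0 : ℝ) ∈ Set.Icc (Φ t₀) (Φ 1) := ⟨hΦt₀neg.le, hpos.le⟩
      obtain ⟨s, hs, hΦs⟩ := intermediate_value_Icc hm.2 hΦm hmem
      exact absurd hΦs ((hzero s (lt_of_lt_of_le hm.1 hs.1) hs.2).1)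
  have hΦ1gt : -(2 * Real.pi) < Φ 1 := by
    by_contra h
    push_neg at h
    have hlt : Φ 1 < -(2 * Real.pi) := lt_of_le_of_ne h h1ne.2
    have hmem : (-(2 * Real.pi)) ∈ Set.Icc (Φ 1) (Φ t₀) := by
      constructor
      · exact h
      · nlinarith [Real.pi_pos]
    obtain ⟨s, hs, hΦs⟩ := intermediate_value_Icc' hm.2 hΦm hmem
    exact absurd hΦs ((hzero s (lt_of_lt_of_le hm.1 hs.1) hs.2).2)
  -- final: sin (Φ 1) ≥ 0 forces Φ 1 ≤ −π
  obtain ⟨hsin1, -⟩ := hsincos 1 ⟨zero_le_one, le_rfl⟩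
  have hQ1 := hQ 1 one_pos
  have hsin1nonneg : 0 ≤ Real.sin (Φ 1) := by
    rw [hsin1]
    apply div_nonneg
    · nlinarith
    · exact (hPQ 1 ⟨zero_le_one, le_rfl⟩).le
  refine ⟨hΦ1gt, ?_⟩
  by_contra h
  push_neg at h
  have h2 : 0 < -Φ 1 := by linarith
  have h3 : -Φ 1 < Real.pi := by linarith
  have := Real.sin_pos_of_pos_of_lt_pi h2 h3
  rw [Real.sin_neg] at this
  linarith
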